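/- For every μ > 0, every c ∈ ℝ^n, and every x ∈ ℝ^n, the matrix ∇²f_i(x;μ) = (1/g) I_n − (x − c)(x − c)ᵀ/g³ with g = √(‖x − c‖² + μ²) is positive semidefinite and has operator norm (induced by the Euclidean norm) at most 1/μ; its eigenvalues are 1/g with multiplicity n − 1 and μ²/g³ with multiplicity 1 (when x ≠ c). -/

import Mathlib

open Real

noncomputable section

/-- The matrix `(1/g) I_n − (x − c)(x − c)ᵀ/g³` with `g = √(‖x − c‖² + μ²)`. -/
def hessMat (n : ℕ) (μ : ℝ) (c x : EuclideanSpace ℝ (Fin n)) : Matrix (Fin n) (Fin n) ℝ :=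
  (Real.sqrt (‖x - c‖ ^ 2 + μ ^ 2))⁻¹ • (1 : Matrix (Fin n) (Fin n) ℝ)
    - ((Real.sqrt (‖x - c‖ ^ 2 + μ ^ 2)) ^ 3)⁻¹ •
        Matrix.vecMulVec (fun j => (x - c) j) (fun j => (x - c) j)

end

open Matrix Polynomial

private lemma eval_charpoly' {n : ℕ} (M : Matrix (Fin n) (Fin n) ℝ) (t : ℝ) :
    (M.charpoly).eval t = (t • (1 : Matrix (Fin n) (Fin n) ℝ) - M).det := by
  rw [Matrix.charpoly, ← Polynomial.coe_evalRingHom, RingHom.map_det]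
  congr 1
  ext i j
  by_cases h : i = j <;>
    simp [h, Matrix.charmatrix_apply_eq, Matrix.charmatrix_apply_ne, Matrix.one_apply]

private lemma hess_mulVec {n : ℕ} (a b : ℝ) (v y : Fin n → ℝ) :
    (a • (1 : Matrix (Fin n) (Fin n) ℝ) - b • Matrix.vecMulVec v v) *ᵥ y
      = a • y - (b * (v ⬝ᵥ y)) • v := by
  funext i
  simp only [Matrix.mulVec, dotProduct, Matrix.sub_apply, Matrix.smul_apply, Matrix.one_apply,
    Matrix.vecMulVec_apply, smul_eq_mul, sub_mul, mul_ite, mul_one, mul_zero, ite_mul, zero_mul,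
    Finset.sum_sub_distrib, Finset.sum_ite_eq, Finset.mem_univ, if_true, Pi.sub_apply,
    Pi.smul_apply, Finset.sum_mul, Finset.mul_sum]
  congr 1
  apply Finset.sum_congr rfl
  intro j _
  ring

private lemma charpoly_aux {n : ℕ} (hn : 0 < n) (a b : ℝ) (v : Fin n → ℝ) :
    (a • (1 : Matrix (Fin n) (Fin n) ℝ) - b • Matrix.vecMulVec v v).charpoly
      = (X - C a) ^ (n - 1) * (X - C (a - b * (v ⬝ᵥ v))) := by
  apply Polynomial.eq_of_infinite_eval_eq
  apply ((Set.finite_singleton a).infinite_compl).mono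
  intro t ht
  simp only [Set.mem_compl_iff, Set.mem_singleton_iff] at ht
  have ht' : t - a ≠ 0 := sub_ne_zero.mpr ht
  show _ = _
  rw [eval_charpoly']
  letI : Fintype (Fin 1) := Unique.fintype
  have h1 : t • (1 : Matrix (Fin n) (Fin n) ℝ)
        - (a • (1 : Matrix (Fin n) (Fin n) ℝ) - b • Matrix.vecMulVec v v)
      = (t - a) • ((1 : Matrix (Fin n) (Fin n) ℝ)
          + Matrix.replicateCol (Fin 1) (((t - a)⁻¹ * b) • v) * Matrix.replicateRow (Fin 1) v) := by
    rw [Matrix.vecMulVec_eq (Fin 1)]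
    have hc : Matrix.replicateCol (Fin 1) (((t - a)⁻¹ * b) • v)
        = ((t - a)⁻¹ * b) • Matrix.replicateCol (Fin 1) v := by
      ext i j; simp
    rw [smul_add, hc, Matrix.smul_mul, smul_smul]
    have : (t - a) * ((t - a)⁻¹ * b) = b := by field_simp
    rw [this]
    module
  rw [h1, Matrix.det_smul, Matrix.det_one_add_replicateCol_mul_replicateRow, Fintype.card_fin]
  have hdot : v ⬝ᵥ (((t - a)⁻¹ * b) • v) = (t - a)⁻¹ * b * (v ⬝ᵥ v) := by
    simp only [dotProduct, Pi.smul_apply, smul_eq_mul, Finset.mul_sum]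
    apply Finset.sum_congr rfl
    intro j _
    ring
  rw [hdot]
  have hn1 : (t - a) ^ n = (t - a) ^ (n - 1) * (t - a) := by
    conv_lhs => rw [← Nat.succ_pred_eq_of_pos hn, pow_succ]
    rfl
  rw [hn1]
  simp only [eval_mul, eval_pow, eval_sub, eval_X, eval_C]
  field_simp
  ring

private lemma norm_sq_eq_dot {n : ℕ} (z : EuclideanSpace ℝ (Fin n)) :
    ‖z‖ ^ 2 = (fun i => z i) ⬝ᵥ (fun i => z i) := by
  rw [EuclideanSpace.norm_eq, Real.sq_sqrt (by positivity)]
  simp [dotProduct, Real.norm_eq_abs, sq_abs, pow_two]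

set_option maxHeartbeats 1600000 in
theorem stmt_11 (n : ℕ) (μ : ℝ) (hμ : 0 < μ) (c x : EuclideanSpace ℝ (Fin n)) :
    (hessMat n μ c x).PosSemidef ∧
      ‖Matrix.toEuclideanCLM (𝕜 := ℝ) (hessMat n μ c x)‖ ≤ 1 / μ ∧
        (x ≠ c →
          (hessMat n μ c x).charpoly =
            (Polynomial.X - Polynomial.C (Real.sqrt (‖x - c‖ ^ 2 + μ ^ 2))⁻¹) ^ (n - 1) *
              (Polynomial.X -
                Polynomial.C (μ ^ 2 / (Real.sqrt (‖x - c‖ ^ 2 + μ ^ 2)) ^ 3))) := by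
  set v : Fin n → ℝ := fun j => (x - c) j with hv
  set g : ℝ := Real.sqrt (‖x - c‖ ^ 2 + μ ^ 2) with hgdef
  have hgpos : 0 < g := Real.sqrt_pos.mpr (by positivity)
  have hgsq : g ^ 2 = ‖x - c‖ ^ 2 + μ ^ 2 := Real.sq_sqrt (by positivity)
  have hμg : μ ≤ g := by
    rw [hgdef]
    rw [show μ = Real.sqrt (μ ^ 2) from (Real.sqrt_sq hμ.le).symm]
    apply Real.sqrt_le_sqrt
    nlinarith [sq_nonneg ‖x - c‖, Real.sq_sqrt (sq_nonneg μ)]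
  have hVdot : v ⬝ᵥ v = ‖x - c‖ ^ 2 := (norm_sq_eq_dot (x - c)).symm
  have hV0 : 0 ≤ ‖x - c‖ ^ 2 := sq_nonneg _
  set u : ℝ := g⁻¹ with hu
  have hgu : g * u = 1 := mul_inv_cancel₀ hgpos.ne'
  have hupos : 0 < u := inv_pos.mpr hgpos
  have hMform : hessMat n μ c x
      = u • (1 : Matrix (Fin n) (Fin n) ℝ) - (u ^ 3) • Matrix.vecMulVec v v := by
    rw [hessMat, inv_pow]
  refine ⟨posSemidef_iff_dotProduct_mulVec.mpr ⟨?_, ?_⟩, ?_, ?_⟩ <;> clear_value v g u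
  · -- Hermitian
    show _ᴴ = _
    ext i j
    simp only [hessMat, Matrix.conjTranspose_apply, Matrix.sub_apply, Matrix.smul_apply,
      Matrix.one_apply, Matrix.vecMulVec_apply, smul_eq_mul, star_trivial]
    by_cases h : i = j
    · subst h; ring
    · rw [if_neg h, if_neg (Ne.symm h)]
      ring
  · -- quadratic form
    intro y
    have hy : star y = y := by funext i; simp
    rw [hy, hMform, hess_mulVec, dotProduct_sub, dotProduct_smul, dotProduct_smul,
      dotProduct_comm y v]
    set Y := y ⬝ᵥ y with hY
    set T := v ⬝ᵥ y with hT
    have hYpos : 0 ≤ Y := by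
      rw [hY]; exact Finset.sum_nonneg fun i _ => mul_self_nonneg _
    have hCS : T ^ 2 ≤ (‖x - c‖ ^ 2) * Y := by
      rw [← hVdot, hT, hY]
      simpa [dotProduct, pow_two] using
        Finset.sum_mul_sq_le_sq_mul_sq Finset.univ v y
    have hgg : u ^ 2 * g ^ 2 = 1 := by
      have : (g * u) ^ 2 = 1 := by rw [hgu]; norm_num
      nlinarith [this]
    simp only [smul_eq_mul]
    have e1 : u * Y = u ^ 3 * (g ^ 2 * Y) := by linear_combination (-(u*Y)) * hgg
    have e2 : g ^ 2 * Y = ‖x - c‖ ^ 2 * Y + μ ^ 2 * Y := by linear_combination Y * hgsq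
    have e4 : 0 ≤ u ^ 3 * (g ^ 2 * Y - T ^ 2) :=
      mul_nonneg (by positivity)
        (by nlinarith [hCS, e2, mul_nonneg (sq_nonneg μ) hYpos])
    nlinarith [e4, e1]
  · -- norm bound
    apply ContinuousLinearMap.opNorm_le_bound _ (by positivity)
    intro z
    set w := Matrix.toEuclideanCLM (𝕜 := ℝ) (hessMat n μ c x) z with hw
    have hwfun : (fun i => w i) = (hessMat n μ c x) *ᵥ (fun i => z i) := by
      funext i
      exact congrFun (Matrix.ofLp_toEuclideanCLM (𝕜 := ℝ) (hessMat n μ c x) z) i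
    have hsq : ‖w‖ ^ 2 ≤ (1 / μ * ‖z‖) ^ 2 := by
      rw [norm_sq_eq_dot, hwfun, hMform, hess_mulVec]
      have hzsq : ‖z‖ ^ 2 = (fun i => z i) ⬝ᵥ (fun i => z i) := norm_sq_eq_dot z
      set y : Fin n → ℝ := fun i => z i with hyd
      rw [mul_pow, hzsq]
      simp only [dotProduct_sub, sub_dotProduct, smul_dotProduct, dotProduct_smul, smul_eq_mul,
        dotProduct_comm y v, hVdot]
      set Yd := y ⬝ᵥ y with hYd
      set T := v ⬝ᵥ y with hT
      have hCS : T ^ 2 ≤ (‖x - c‖ ^ 2) * Yd := by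
        rw [← hVdot, hT, hYd]
        simpa [dotProduct, pow_two] using
          Finset.sum_mul_sq_le_sq_mul_sq Finset.univ v y
      have hYpos : 0 ≤ Yd := by
        rw [hYd]; exact Finset.sum_nonneg fun i _ => mul_self_nonneg _
      clear_value Yd T
      have hgg : u ^ 2 * g ^ 2 = 1 := by
        have h' : (g * u) ^ 2 = 1 := by rw [hgu]; norm_num
        nlinarith [h']
      have hu2V : u ^ 2 * ‖x - c‖ ^ 2 + u ^ 2 * μ ^ 2 = 1 := by
        linear_combination hgg - u ^ 2 * hgsq
      have hu2V' : u ^ 2 * ‖x - c‖ ^ 2 ≤ 1 := by nlinarith [mul_nonneg (sq_nonneg u) (sq_nonneg μ)]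
      have c1 : u ^ 6 * T ^ 2 * ‖x - c‖ ^ 2 ≤ 2 * (u ^ 4 * T ^ 2) := by
        nlinarith [mul_le_mul_of_nonneg_left hu2V' (show (0:ℝ) ≤ u ^ 4 * T ^ 2 by positivity),
          sq_nonneg (u ^ 2 * T), sq_nonneg T]
      have hule : u ≤ 1 / μ := by
        rw [hu, one_div]
        exact inv_anti₀ hμ hμg
      have c2 : u ^ 2 * Yd ≤ (1 / μ) ^ 2 * Yd := by
        apply mul_le_mul_of_nonneg_right _ hYpos
        exact pow_le_pow_left₀ hupos.le hule 2
      nlinarith [c1, c2, sq_nonneg T, hYpos]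
    have := (pow_le_pow_iff_left₀ (norm_nonneg w) (by positivity) (two_ne_zero)).mp hsq
    simpa using this
  · -- charpoly
    intro hx
    have hn : 0 < n := by
      rcases Nat.eq_zero_or_pos n with h | h
      · subst h
        exact absurd (PiLp.ext fun i => Fin.elim0 i : x = c) hx
      · exact h
    rw [hMform, charpoly_aux hn, hVdot]
    have he : u - u ^ 3 * ‖x - c‖ ^ 2 = μ ^ 2 / g ^ 3 := by
      have hV : ‖x - c‖ ^ 2 = g ^ 2 - μ ^ 2 := by linarith
      rw [hV, hu]
      field_simp
      ring
    rw [he]
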